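/- Define the sequence Γ_n(x,y,z,x̄,ȳ,z̄) recursively as in the generalized Dumont-Foata recurrence, and define µ_n by µ_0 = 1 and as the generating function of Motzkin paths: µ_n = Σ over Motzkin paths of length n of the product of weights, where a level step at height i has weight b_i = (x+i)(ȳ+i)+(y+i)(z̄+i)+(z+i)(x̄+i) − i(i+1) and an up step from height i−1 to height i has weight λ_i = i(x̄+y+i−1)(ȳ+z+i−1)(z̄+x+i−1) (down steps have weight 1). Then Γ_{n+1} = µ_n for all n ≥ 0. -/

import Mathlib

/-- Auxiliary: `GammaAux n = Γ_{n+1}` for the generalized Dumont-Foata polynomials. -/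
def GammaAux {R : Type*} [CommRing R] : ℕ → R → R → R → R → R → R → R
  | 0, _, _, _, _, _, _ => 1
  | n + 1, x, y, z, xb, yb, zb =>
      (x + zb) * (y + xb) * GammaAux n (x + 1) y z (xb + 1) yb zb
        + (x * (yb - y) + xb * (z - zb) - x * xb) * GammaAux n x y z xb yb zb

/-- The generalized Dumont-Foata polynomial `Γ_n` (defined for `n ≥ 1`, with `Γ_1 = 1`). -/
def Gamma {R : Type*} [CommRing R] (n : ℕ) : R → R → R → R → R → R → R :=
  GammaAux (n - 1)

/-- Steps of a Motzkin path. -/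
inductive MStep
  | up
  | down
  | level
deriving DecidableEq

instance : Fintype MStep :=
  ⟨{MStep.up, MStep.down, MStep.level}, fun x => by cases x <;> simp⟩

/-- `isMotzkinFrom h s` : the path `s`, started at height `h`, stays weakly above
the x-axis and ends at height `0`. -/
def isMotzkinFrom : ℕ → List MStep → Bool
  | h, [] => h = 0
  | h, .up :: rest => isMotzkinFrom (h + 1) rest
  | h, .down :: rest => h ≠ 0 && isMotzkinFrom (h - 1) rest
  | h, .level :: rest => isMotzkinFrom h rest

/-- Weight of a path started at height `h`: a level step at height `i` weighs `b i`,
an up step from height `i - 1` to `i` weighs `lam i`, a down step weighs `1`. -/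
def pathWeight {R : Type*} [CommRing R] (b lam : ℕ → R) : ℕ → List MStep → R
  | _, [] => 1
  | h, .up :: rest => lam (h + 1) * pathWeight b lam (h + 1) rest
  | h, .down :: rest => pathWeight b lam (h - 1) rest
  | h, .level :: rest => b h * pathWeight b lam h rest

/-- The generating function of Motzkin paths of length `n` with weights `b`, `lam`. -/
def motzkinSum {R : Type*} [CommRing R] (b lam : ℕ → R) (n : ℕ) : R :=
  ∑ f : Fin n → MStep,
    if isMotzkinFrom 0 (List.ofFn f) then pathWeight b lam 0 (List.ofFn f) else 0

/-! ### Auxiliary development -/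

section Aux

variable {R : Type*} [CommRing R]

/-- Column vectors: `u b lam n h` = weighted sum over Motzkin paths of length `n`
from height `h` down to `0`. -/
def mu (b lam : ℕ → R) : ℕ → ℕ → R
  | 0, h => if h = 0 then 1 else 0
  | n + 1, h =>
      lam (h + 1) * mu b lam n (h + 1) + b h * mu b lam n h
        + (if h = 0 then 0 else mu b lam n (h - 1))

/-- Row vectors: `mw b lam n h` = weighted sum over nonnegative paths of length `n`
from height `0` up to height `h`.  (Needs `lam 0 = 0` for the intended meaning.) -/
def mw (b lam : ℕ → R) : ℕ → ℕ → R
  | 0, h => if h = 0 then 1 else 0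
  | n + 1, h => lam h * mw b lam n (h - 1) + b h * mw b lam n h + mw b lam n (h + 1)

lemma mu_eq_zero (b lam : ℕ → R) : ∀ n h, n < h → mu b lam n h = 0 := by
  intro n
  induction n with
  | zero => intro h hh; simp only [mu]; rw [if_neg (by omega)]
  | succ n ih =>
    intro h hh
    have h0 : h ≠ 0 := by omega
    simp only [mu, if_neg h0]
    rw [ih (h + 1) (by omega), ih h (by omega), ih (h - 1) (by omega)]
    ring

lemma mw_eq_zero (b lam : ℕ → R) : ∀ n h, n < h → mw b lam n h = 0 := by
  intro n
  induction n with
  | zero => intro h hh; simp only [mw]; rw [if_neg (by omega)]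
  | succ n ih =>
    intro h hh
    simp only [mw]
    rw [ih (h + 1) (by omega), ih h (by omega), ih (h - 1) (by omega)]
    ring

/-- Sum over tuples of length `n + 1` splits along the first entry. -/
lemma sum_pi_succ {M : Type*} [AddCommMonoid M] (n : ℕ)
    (F : (Fin (n + 1) → MStep) → M) :
    ∑ f, F f = ∑ a : MStep, ∑ g : Fin n → MStep, F (Fin.cons a g) := by
  calc ∑ f, F f = ∑ p : MStep × (Fin n → MStep), F (Fin.cons p.1 p.2) :=
        (Fintype.sum_equiv (Fin.consEquiv fun _ => MStep) _ _ (fun p => rfl)).symm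
    _ = ∑ a : MStep, ∑ g : Fin n → MStep, F (Fin.cons a g) :=
        Fintype.sum_prod_type (f := fun p => F (Fin.cons p.1 p.2))

lemma motzkin_aux (b lam : ℕ → R) : ∀ n h,
    (∑ f : Fin n → MStep,
      if isMotzkinFrom h (List.ofFn f) then pathWeight b lam h (List.ofFn f) else 0)
      = mu b lam n h := by
  intro n
  induction n with
  | zero =>
    intro h
    rw [Fintype.sum_subsingleton _ (fun i : Fin 0 => i.elim0)]
    by_cases h0 : h = 0 <;> simp [isMotzkinFrom, pathWeight, mu, h0]
  | succ n ih =>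
    intro h
    rw [sum_pi_succ]
    have hofn : ∀ (a : MStep) (g : Fin n → MStep),
        List.ofFn (Fin.cons a g) = a :: List.ofFn g := by
      intro a g
      rw [List.ofFn_succ]
      simp
    have hsum : ∀ a : MStep, (∑ g : Fin n → MStep,
        if isMotzkinFrom h (List.ofFn (Fin.cons a g))
          then pathWeight b lam h (List.ofFn (Fin.cons a g)) else 0) =
        match a with
        | .up => lam (h + 1) * mu b lam n (h + 1)
        | .level => b h * mu b lam n h
        | .down => if h = 0 then 0 else mu b lam n (h - 1) := by
      intro a
      cases a with
      | up =>
        simp only [hofn, isMotzkinFrom, pathWeight, ← ih (h + 1), Finset.mul_sum]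
        exact Finset.sum_congr rfl fun g _ => by split <;> simp
      | level =>
        simp only [hofn, isMotzkinFrom, pathWeight, ← ih h, Finset.mul_sum]
        exact Finset.sum_congr rfl fun g _ => by split <;> simp
      | down =>
        by_cases h0 : h = 0
        · simp [hofn, isMotzkinFrom, h0]
        · simp only [hofn, isMotzkinFrom, pathWeight, if_neg h0, ← ih (h - 1)]
          exact Finset.sum_congr rfl fun g _ => by simp [h0]
    rw [Finset.sum_congr rfl fun a _ => hsum a]
    show _ = mu b lam (n+1) h
    rw [show (Finset.univ : Finset MStep) = {MStep.up, MStep.down, MStep.level} from rfl]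
    rw [Finset.sum_insert (by decide), Finset.sum_insert (by decide),
      Finset.sum_singleton]
    simp only [mu]
    ring
  
lemma motzkinSum_eq_mu (b lam : ℕ → R) (n : ℕ) :
    motzkinSum b lam n = mu b lam n 0 :=
  motzkin_aux b lam n 0

lemma sum_shift (F : ℕ → R) (N : ℕ) :
    ∑ h ∈ Finset.range N, F (h + 1) = (∑ h ∈ Finset.range N, F h) + F N - F 0 := by
  have h1 := Finset.sum_range_succ' F N
  have h2 := Finset.sum_range_succ F N
  linear_combination h1.symm + h2

lemma exchange (b lam : ℕ → R) (hl : lam 0 = 0) (N n m : ℕ) (hn : n < N) (hm : m < N) :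
    ∑ h ∈ Finset.range N, mw b lam (n + 1) h * mu b lam m h
      = ∑ h ∈ Finset.range N, mw b lam n h * mu b lam (m + 1) h := by
  have e1 : ∑ h ∈ Finset.range N, lam h * mw b lam n (h - 1) * mu b lam m h
      = ∑ h ∈ Finset.range N, mw b lam n h * (lam (h + 1) * mu b lam m (h + 1)) := by
    rw [show (fun h => mw b lam n h * (lam (h+1) * mu b lam m (h+1)))
        = fun h => (fun k => lam k * mw b lam n (k - 1) * mu b lam m k) (h + 1) from
        funext fun h => by simp only [Nat.add_sub_cancel]; ring]
    rw [sum_shift (fun k => lam k * mw b lam n (k - 1) * mu b lam m k) N]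
    rw [mu_eq_zero b lam m N hm, hl]
    ring
  have e2 : ∑ h ∈ Finset.range N, mw b lam n h * (if h = 0 then 0 else mu b lam m (h - 1))
      = ∑ h ∈ Finset.range N, mw b lam n (h + 1) * mu b lam m h := by
    rw [show (fun h => mw b lam n (h+1) * mu b lam m h)
        = fun h => (fun k => mw b lam n k * (if k = 0 then 0 else mu b lam m (k - 1))) (h + 1)
        from funext fun h => by simp only [Nat.add_sub_cancel]; rw [if_neg (by omega)]]
    rw [sum_shift (fun k => mw b lam n k * (if k = 0 then 0 else mu b lam m (k - 1))) N]
    rw [mw_eq_zero b lam n N hn]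
    simp
  calc ∑ h ∈ Finset.range N, mw b lam (n + 1) h * mu b lam m h
      = ∑ h ∈ Finset.range N, (lam h * mw b lam n (h - 1) * mu b lam m h
          + mw b lam n h * (b h * mu b lam m h) + mw b lam n (h + 1) * mu b lam m h) := by
        apply Finset.sum_congr rfl
        intro h _
        simp only [mw]
        ring
    _ = ∑ h ∈ Finset.range N, (mw b lam n h * (lam (h + 1) * mu b lam m (h + 1))
          + mw b lam n h * (b h * mu b lam m h)
          + mw b lam n h * (if h = 0 then 0 else mu b lam m (h - 1))) := by
        simp only [Finset.sum_add_distrib]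
        rw [e1, ← e2]
    _ = ∑ h ∈ Finset.range N, mw b lam n h * mu b lam (m + 1) h := by
        apply Finset.sum_congr rfl
        intro h _
        simp only [mu]
        ring
  
lemma mw_eq_mu (b lam : ℕ → R) (hl : lam 0 = 0) (K : ℕ) :
    mw b lam K 0 = mu b lam K 0 := by
  have C : ∀ m k, k + m = K →
      ∑ h ∈ Finset.range (K + 1), mw b lam k h * mu b lam m h = mw b lam K 0 := by
    intro m
    induction m with
    | zero =>
      intro k hk
      simp only [Nat.add_zero] at hk
      subst hk
      simp [mu, Finset.sum_ite_eq']
    | succ m ih =>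
      intro k hk
      rw [← exchange b lam hl (K + 1) k m (by omega) (by omega)]
      exact ih (k + 1) (by omega)
  have := C K 0 (by omega)
  rw [← this]
  simp [mw, ite_mul, Finset.sum_ite_eq']

/-! ### The specific weights -/

variable (x y z xb yb zb : R)

/-- The diagonal weights. -/
def bW (x y z xb yb zb : R) : ℕ → R := fun i =>
  (x + (i : R)) * (yb + i) + (y + i) * (zb + i) + (z + i) * (xb + i) - i * (i + 1)

/-- The up-step weights. -/
def lW (x y z xb yb zb : R) : ℕ → R := fun i =>
  (i : R) * (xb + y + (i : R) - 1) * (yb + z + (i : R) - 1) * (zb + x + (i : R) - 1)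

lemma lW_zero : lW x y z xb yb zb 0 = 0 := by simp [lW]

/-- The key "Darboux transformation" identity relating row sums for the original
weights to row sums for the shifted weights. -/
lemma key (n : ℕ) : ∀ h : ℕ,
    (x + zb + (h : R)) * (y + xb + (h : R)) * mw (bW x y z xb yb zb) (lW x y z xb yb zb) n h
      + mw (bW x y z xb yb zb) (lW x y z xb yb zb) n (h + 1)
    = (x + zb) * (y + xb)
        * mw (bW (x+1) y z (xb+1) yb zb) (lW (x+1) y z (xb+1) yb zb) n h := by
  induction n with
  | zero =>
    intro h
    by_cases h0 : h = 0 <;> simp [mw, h0]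
  | succ n ih =>
    intro h
    match h with
    | 0 =>
      simp only [mw, lW_zero, Nat.cast_zero, zero_mul, mul_zero, zero_add, add_zero]
      have i0 := ih 0
      have i1 := ih 1
      simp only [bW, lW, Nat.cast_zero, Nat.cast_one, add_zero] at i0 i1 ⊢
      push_cast at i0 i1 ⊢
      linear_combination
        ((x + 1 + (0:R)) * (yb + 0) + (y + 0) * (zb + 0) + (z + 0) * (xb + 1 + 0) - 0) * i0 + i1
    | (k + 1) =>
      simp only [mw, Nat.add_sub_cancel]
      have i0 := ih k
      have i1 := ih (k + 1)
      have i2 := ih (k + 2)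
      simp only [bW, lW]
      push_cast
      push_cast at i0 i1 i2
      linear_combination
        (((k:R) + 1) * (xb + 1 + y + ((k:R) + 1) - 1) * (yb + z + ((k:R) + 1) - 1)
            * (zb + x + 1 + ((k:R) + 1) - 1)) * i0
        + ((x + 1 + ((k:R)+1)) * (yb + ((k:R)+1)) + (y + ((k:R)+1)) * (zb + ((k:R)+1))
            + (z + ((k:R)+1)) * (xb + 1 + ((k:R)+1)) - ((k:R)+1) * (((k:R)+1) + 1)) * i1
        + i2

/-- `GammaAux` equals the row-sum at `0`. -/
lemma gammaAux_eq_mw : ∀ (n : ℕ) (x y z xb yb zb : R),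
    GammaAux n x y z xb yb zb = mw (bW x y z xb yb zb) (lW x y z xb yb zb) n 0 := by
  intro n
  induction n with
  | zero => intro x y z xb yb zb; simp [GammaAux, mw]
  | succ n ih =>
    intro x y z xb yb zb
    have hrec : GammaAux (n + 1) x y z xb yb zb
        = (x + zb) * (y + xb) * GammaAux n (x + 1) y z (xb + 1) yb zb
          + (x * (yb - y) + xb * (z - zb) - x * xb) * GammaAux n x y z xb yb zb := rfl
    rw [hrec, ih, ih]
    have hk := key x y z xb yb zb n 0
    simp only [Nat.cast_zero, add_zero] at hk
    show _ = mw (bW x y z xb yb zb) (lW x y z xb yb zb) (n + 1) 0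
    simp only [mw, lW_zero, Nat.cast_zero, zero_mul, mul_zero, zero_add]
    simp only [bW]
    push_cast
    linear_combination -hk

end Aux

theorem gamma_eq_motzkinSum {R : Type*} [CommRing R] (x y z xb yb zb : R) (n : ℕ) :
    Gamma (n + 1) x y z xb yb zb =
      motzkinSum
        (fun i => (x + (i : R)) * (yb + i) + (y + i) * (zb + i) + (z + i) * (xb + i)
          - i * (i + 1))
        (fun i => (i : R) * (xb + y + (i : R) - 1) * (yb + z + (i : R) - 1)
          * (zb + x + (i : R) - 1))
        n := by
  show GammaAux n x y z xb yb zb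
      = motzkinSum (bW x y z xb yb zb) (lW x y z xb yb zb) n
  rw [motzkinSum_eq_mu, ← mw_eq_mu _ _ (lW_zero x y z xb yb zb), gammaAux_eq_mw]
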